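/- Let (θ_k, r_k) be the global AEGD iterates with effective step sizes η_k := η r_{k+1}/g(θ_k). Suppose f is convex, L-smooth and has a global minimizer θ*. If η_j ≤ 1/L for all j with k₀ ≤ j < k (for some k₀ ≥ 0), then f(θ_k) − f(θ*) ≤ c₁ ‖θ_{k₀} − θ*‖² / (2 (k − k₀) r_k), where c₁ := √(f(θ_{k₀})+c) / η. -/

import Mathlib

open Filter Topology Finset

variable {E : Type*} [NormedAddCommGroup E] [InnerProductSpace ℝ E] [CompleteSpace E]

lemma aegdAux_line {f : E → ℝ} (hf : Differentiable ℝ f) (x v : E) (t : ℝ) :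
    HasDerivAt (fun s : ℝ => f (x + s • v))
      (inner ℝ (gradient f (x + t • v)) v : ℝ) t := by
  have h1 : HasFDerivAt f (InnerProductSpace.toDual ℝ E (gradient f (x + t • v))) (x + t • v) :=
    (hf _).hasGradientAt.hasFDerivAt
  have h2 : HasDerivAt (fun s : ℝ => x + s • v) v t := by
    simpa using ((hasDerivAt_id t).smul_const v).const_add x
  simpa [InnerProductSpace.toDual_apply_apply, Function.comp_def] using h1.comp_hasDerivAt t h2

lemma aegd_descent {f : E → ℝ} (hf : Differentiable ℝ f) {L : ℝ} (hL : 0 < L)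
    (hLip : ∀ u v, ‖gradient f u - gradient f v‖ ≤ L * ‖u - v‖) (x y : E) :
    f y ≤ f x + (inner ℝ (gradient f x) (y - x) : ℝ) + L / 2 * ‖y - x‖ ^ 2 := by
  set v := y - x with hv
  set C : ℝ := inner ℝ (gradient f x) v with hC
  set φ : ℝ → ℝ := fun t => f (x + t • v) - t * C - L / 2 * ‖v‖ ^ 2 * t ^ 2 with hφ
  have hφd : ∀ t : ℝ, HasDerivAt φ
      ((inner ℝ (gradient f (x + t • v)) v : ℝ) - C - L / 2 * ‖v‖ ^ 2 * (2 * t)) t := by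
    intro t
    have h1 := aegdAux_line hf x v t
    have h2 : HasDerivAt (fun t : ℝ => t * C) C t := hasDerivAt_mul_const C
    have h3 : HasDerivAt (fun t : ℝ => L / 2 * ‖v‖ ^ 2 * t ^ 2)
        (L / 2 * ‖v‖ ^ 2 * (2 * t)) t := by
      have := (hasDerivAt_pow 2 t).const_mul (L / 2 * ‖v‖ ^ 2)
      have e : L / 2 * ‖v‖ ^ 2 * (2 * t) = L / 2 * ‖v‖ ^ 2 * (↑2 * t ^ (2 - 1)) := by ring
      rw [e]; exact this
    exact (h1.sub h2).sub h3
  have hkey : φ 1 ≤ φ 0 := by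
    have hanti : AntitoneOn φ (Set.Icc 0 1) := by
      apply antitoneOn_of_deriv_nonpos (convex_Icc 0 1)
      · exact (Differentiable.continuous fun t => (hφd t).differentiableAt).continuousOn
      · intro t _; exact ((hφd t).differentiableAt).differentiableWithinAt
      · intro t ht
        rw [interior_Icc] at ht
        rw [(hφd t).deriv]
        have h1 : (inner ℝ (gradient f (x + t • v)) v : ℝ) - C ≤ L * (t * ‖v‖) * ‖v‖ := by
          have e1 : (inner ℝ (gradient f (x + t • v)) v : ℝ) - C
              = inner ℝ (gradient f (x + t • v) - gradient f x) v := by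
            rw [inner_sub_left]
          have e2 := real_inner_le_norm (gradient f (x + t • v) - gradient f x) v
          have e3 := hLip (x + t • v) x
          have e4 : ‖x + t • v - x‖ = |t| * ‖v‖ := by
            simp [norm_smul, Real.norm_eq_abs]
          rw [e4, abs_of_pos ht.1] at e3
          rw [e1]
          calc (inner ℝ (gradient f (x + t • v) - gradient f x) v : ℝ)
              ≤ ‖gradient f (x + t • v) - gradient f x‖ * ‖v‖ := e2
            _ ≤ L * (t * ‖v‖) * ‖v‖ := by
                apply mul_le_mul_of_nonneg_right _ (norm_nonneg v)
                calc ‖gradient f (x + t • v) - gradient f x‖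
                    ≤ L * ‖x + t • v - x‖ := hLip _ _
                  _ = L * (t * ‖v‖) := by rw [e4, abs_of_pos ht.1]
        nlinarith [sq_nonneg ‖v‖]
    exact hanti (Set.mem_Icc.2 ⟨le_refl 0, zero_le_one⟩)
      (Set.mem_Icc.2 ⟨zero_le_one, le_refl 1⟩) zero_le_one
  have hxy : x + (1 : ℝ) • v = y := by simp [hv]
  simp only [hφ, hxy, one_mul, one_pow, zero_smul, add_zero, zero_mul, sub_zero,
    mul_zero, pow_two, mul_one] at hkey
  linarith

lemma aegd_convex_lower {f : E → ℝ} (hf : Differentiable ℝ f)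
    (hconv : ConvexOn ℝ Set.univ f) (x y : E) :
    f x + (inner ℝ (gradient f x) (y - x) : ℝ) ≤ f y := by
  set ψ : ℝ → ℝ := fun s => f (x + s • (y - x)) with hψ
  have hψconv : ConvexOn ℝ Set.univ ψ := by
    refine ⟨convex_univ, fun s _ t _ a b ha hb hab => ?_⟩
    have h : x + (a • s + b • t) • (y - x)
        = a • (x + s • (y - x)) + b • (x + t • (y - x)) := by
      simp only [smul_eq_mul]
      rw [smul_add, smul_add, smul_smul, smul_smul, add_add_add_comm, ← add_smul,
        ← add_smul, hab, one_smul]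
    simp only [hψ, smul_eq_mul] at h ⊢
    rw [h]
    exact hconv.2 (Set.mem_univ _) (Set.mem_univ _) ha hb hab
  have hd : HasDerivAt ψ (inner ℝ (gradient f x) (y - x) : ℝ) 0 := by
    simpa using aegdAux_line hf x (y - x) 0
  have hs := hψconv.le_slope_of_hasDerivAt (Set.mem_univ (0 : ℝ)) (Set.mem_univ 1)
    zero_lt_one hd
  have : slope ψ 0 1 = f y - f x := by
    simp [slope_def_field, hψ]
  rw [this] at hs
  linarith

set_option maxHeartbeats 1600000 in
/-- For the global AEGD iterates, if `f` is convex, `L`-smooth with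
global minimizer `θ*`, and `η_j ≤ 1/L` for all `k₀ ≤ j < k`, then
`f(θ_k) − f(θ*) ≤ c₁ ‖θ_{k₀} − θ*‖² / (2 (k − k₀) r_k)` with
`c₁ := √(f(θ_{k₀})+c)/η`. -/
theorem aegd_convex_rate {n : ℕ} (f : EuclideanSpace ℝ (Fin n) → ℝ)
    (hf : Differentiable ℝ f) (hbdd : ∃ B : ℝ, ∀ x, B ≤ f x)
    (hconv : ConvexOn ℝ Set.univ f)
    (c : ℝ) (hc : 0 < c) (hfc : ∀ x, 0 < f x + c)
    (g : EuclideanSpace ℝ (Fin n) → ℝ) (hg : g = fun x => Real.sqrt (f x + c))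
    (L : ℝ) (hL : 0 < L)
    (hLip : ∀ u v, ‖gradient f u - gradient f v‖ ≤ L * ‖u - v‖)
    (θstar : EuclideanSpace ℝ (Fin n)) (hmin : ∀ x, f θstar ≤ f x)
    (η : ℝ) (hη : 0 < η)
    (θ : ℕ → EuclideanSpace ℝ (Fin n)) (r : ℕ → ℝ)
    (hr0 : r 0 = g (θ 0))
    (hr : ∀ k, r (k + 1) = r k / (1 + 2 * η * ‖gradient g (θ k)‖ ^ 2))
    (hθ : ∀ k, θ (k + 1) = θ k - (2 * η * r (k + 1)) • gradient g (θ k))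
    (ηk : ℕ → ℝ) (hηk : ∀ k, ηk k = η * r (k + 1) / g (θ k))
    (k₀ k : ℕ) (hk : k₀ < k)
    (hstep : ∀ j, k₀ ≤ j → j < k → ηk j ≤ 1 / L) :
    f (θ k) - f θstar
      ≤ (Real.sqrt (f (θ k₀) + c) / η) * ‖θ k₀ - θstar‖ ^ 2
          / (2 * ((k : ℝ) - (k₀ : ℝ)) * r k) := by
  -- basic positivity
  have hgpos : ∀ x, 0 < g x := by
    intro x; rw [hg]; exact Real.sqrt_pos.2 (hfc x)
  have hrpos : ∀ j, 0 < r j := by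
    intro j
    induction j with
    | zero => rw [hr0]; exact hgpos _
    | succ m ih =>
      rw [hr m]
      apply div_pos ih
      positivity
  have hrmono : ∀ i j, i ≤ j → r j ≤ r i := by
    intro i j hij
    induction j with
    | zero => simp_all
    | succ m ih =>
      rcases Nat.lt_or_ge i (m + 1) with h | h
      · have h1 := ih (Nat.lt_succ_iff.mp h)
        refine le_trans ?_ h1
        rw [hr m]
        apply div_le_self (hrpos m).le
        nlinarith [sq_nonneg ‖gradient g (θ m)‖, (hrpos m).le]
      · have : i = m + 1 := le_antisymm hij h
        subst this; rfl
  -- gradient of g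
  have hgrad : ∀ x, gradient g x = (1 / (2 * Real.sqrt (f x + c))) • gradient f x := by
    intro x
    have h1 : HasDerivAt Real.sqrt (1 / (2 * Real.sqrt (f x + c))) (f x + c) :=
      Real.hasDerivAt_sqrt (ne_of_gt (hfc x))
    have h2 : HasFDerivAt (fun y => f y + c) (fderiv ℝ f x) x :=
      ((hf x).hasFDerivAt).add_const c
    have h3 : HasFDerivAt g ((1 / (2 * Real.sqrt (f x + c))) • fderiv ℝ f x) x := by
      have := h1.comp_hasFDerivAt x h2
      simpa [hg, Function.comp_def] using this
    rw [gradient, gradient, h3.fderiv, map_smul]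
  -- the iteration in terms of ∇f
  have hθ' : ∀ j, θ (j + 1) = θ j - (ηk j) • gradient f (θ j) := by
    intro j
    rw [hθ j, hgrad (θ j), smul_smul, hηk j, hg]
    congr 2
    have hs : Real.sqrt (f (θ j) + c) ≠ 0 := ne_of_gt (Real.sqrt_pos.2 (hfc (θ j)))
    field_simp
  have hηkpos : ∀ j, 0 < ηk j := by
    intro j
    rw [hηk j]
    exact div_pos (mul_pos hη (hrpos _)) (hgpos _)
  -- per-step inequalities for indices in the window
  have hdesc : ∀ j, k₀ ≤ j → j < k →
      f (θ (j + 1)) ≤ f (θ j) - ηk j / 2 * ‖gradient f (θ j)‖ ^ 2 := by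
    intro j hj1 hj2
    have h1 := aegd_descent hf hL hLip (θ j) (θ (j + 1))
    have h2 : θ (j + 1) - θ j = -(ηk j) • gradient f (θ j) := by
      rw [hθ' j]; module
    rw [h2] at h1
    rw [real_inner_smul_right] at h1
    rw [real_inner_self_eq_norm_sq] at h1
    have h3 : ‖(-(ηk j)) • gradient f (θ j)‖ ^ 2 = (ηk j) ^ 2 * ‖gradient f (θ j)‖ ^ 2 := by
      rw [norm_smul]; simp [mul_pow]
    rw [h3] at h1
    have h4 : L * ηk j ≤ 1 := by
      have := hstep j hj1 hj2
      rw [le_div_iff₀ hL] at this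
      linarith [this]
    have h5 : 0 ≤ (1 - L * ηk j) * (ηk j * ‖gradient f (θ j)‖ ^ 2) :=
      mul_nonneg (by linarith) (mul_nonneg (hηkpos j).le (sq_nonneg _))
    nlinarith [h5]
  have hkey : ∀ j, k₀ ≤ j → j < k →
      ηk j * (f (θ (j + 1)) - f θstar)
        ≤ (‖θ j - θstar‖ ^ 2 - ‖θ (j + 1) - θstar‖ ^ 2) / 2 := by
    intro j hj1 hj2
    have hconvl := aegd_convex_lower hf hconv (θ j) θstar
    have hdist : ‖θ (j + 1) - θstar‖ ^ 2
        = ‖θ j - θstar‖ ^ 2 - 2 * ηk j * (inner ℝ (gradient f (θ j)) (θ j - θstar) : ℝ)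
          + (ηk j) ^ 2 * ‖gradient f (θ j)‖ ^ 2 := by
      have h2 : θ (j + 1) - θstar = (θ j - θstar) - (ηk j) • gradient f (θ j) := by
        rw [hθ' j]; module
      rw [h2, norm_sub_sq_real, real_inner_smul_right, norm_smul, mul_pow,
        Real.norm_eq_abs, sq_abs, real_inner_comm (θ j - θstar) (gradient f (θ j))]
      ring
    have hinner : f (θ j) - f θstar ≤ (inner ℝ (gradient f (θ j)) (θ j - θstar) : ℝ) := by
      have : (inner ℝ (gradient f (θ j)) (θstar - θ j) : ℝ)
          = -(inner ℝ (gradient f (θ j)) (θ j - θstar) : ℝ) := by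
        rw [← inner_neg_right]; congr 1; abel
      rw [this] at hconvl
      linarith
    have hd := hdesc j hj1 hj2
    nlinarith [(hηkpos j).le, sq_nonneg ‖gradient f (θ j)‖]
  have hfdec : ∀ j, k₀ ≤ j → j < k → f (θ (j + 1)) ≤ f (θ j) := by
    intro j hj1 hj2
    have := hdesc j hj1 hj2
    nlinarith [(hηkpos j).le, sq_nonneg ‖gradient f (θ j)‖]
  have hfmono : ∀ i j, k₀ ≤ i → i ≤ j → j ≤ k → f (θ j) ≤ f (θ i) := by
    intro i j hi hij hjk
    induction j with
    | zero => simp_all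
    | succ m ih =>
      rcases Nat.lt_or_ge i (m + 1) with h | h
      · have h1 : i ≤ m := Nat.lt_succ_iff.mp h
        refine le_trans (hfdec m (le_trans hi h1) (Nat.lt_of_succ_le hjk)) ?_
        exact ih h1 (Nat.le_of_succ_le hjk)
      · have : i = m + 1 := le_antisymm hij h
        subst this; rfl
  -- telescoping sum
  have hsum1 : ∑ j ∈ Finset.Ico k₀ k, ηk j * (f (θ (j + 1)) - f θstar)
      ≤ (‖θ k₀ - θstar‖ ^ 2 - ‖θ k - θstar‖ ^ 2) / 2 := by
    have htel : ∑ j ∈ Finset.Ico k₀ k,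
        (‖θ j - θstar‖ ^ 2 - ‖θ (j + 1) - θstar‖ ^ 2) / 2
        = (‖θ k₀ - θstar‖ ^ 2 - ‖θ k - θstar‖ ^ 2) / 2 := by
      rw [← Finset.sum_div]
      congr 1
      rw [Finset.sum_Ico_eq_sub _ hk.le, Finset.sum_range_sub' (fun j => ‖θ j - θstar‖ ^ 2),
        Finset.sum_range_sub' (fun j => ‖θ j - θstar‖ ^ 2)]
      ring
    rw [← htel]
    apply Finset.sum_le_sum
    intro j hj
    rw [Finset.mem_Ico] at hj
    exact hkey j hj.1 hj.2
  have hΔ : 0 ≤ f (θ k) - f θstar := sub_nonneg.2 (hmin _)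
  -- lower bound for each term
  have hterm : ∀ j ∈ Finset.Ico k₀ k,
      ηk j * (f (θ k) - f θstar) ≤ ηk j * (f (θ (j + 1)) - f θstar) := by
    intro j hj
    rw [Finset.mem_Ico] at hj
    apply mul_le_mul_of_nonneg_left _ (hηkpos j).le
    have : f (θ k) ≤ f (θ (j + 1)) :=
      hfmono (j + 1) k (Nat.le_succ_of_le hj.1) (Nat.succ_le_of_lt hj.2) le_rfl
    linarith
  set G := Real.sqrt (f (θ k₀) + c) with hG
  have hGpos : 0 < G := Real.sqrt_pos.2 (hfc _)
  have hgθk₀ : g (θ k₀) = G := by rw [hg]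
  set m : ℝ := (k : ℝ) - (k₀ : ℝ) with hm
  have hmpos : 0 < m := by
    rw [hm]
    have : (k₀ : ℝ) < (k : ℝ) := Nat.cast_lt.2 hk
    linarith
  set D := ‖θ k₀ - θstar‖ ^ 2 with hD
  set Δ := f (θ k) - f θstar with hΔdef
  -- each ηk j is at least η * r k / G on the window
  have hlb : ∀ j ∈ Finset.Ico k₀ k, η * r k / G ≤ ηk j := by
    intro j hj
    rw [Finset.mem_Ico] at hj
    rw [hηk j]
    have h1 : η * r k ≤ η * r (j + 1) :=
      mul_le_mul_of_nonneg_left (hrmono (j + 1) k (Nat.succ_le_of_lt hj.2)) hη.le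
    have h2 : g (θ j) ≤ G := by
      rw [hg]
      exact Real.sqrt_le_sqrt (by linarith [hfmono k₀ j le_rfl hj.1 hj.2.le])
    exact div_le_div₀ (mul_pos hη (hrpos (j + 1))).le h1 (hgpos (θ j)) h2
  have hsum2 : m * (η * r k / G) * Δ ≤ ∑ j ∈ Finset.Ico k₀ k, ηk j * Δ := by
    have h1 : ∑ j ∈ Finset.Ico k₀ k, (η * r k / G) * Δ ≤ ∑ j ∈ Finset.Ico k₀ k, ηk j * Δ :=
      Finset.sum_le_sum fun j hj => mul_le_mul_of_nonneg_right (hlb j hj) hΔ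
    have h2 : ∑ j ∈ Finset.Ico k₀ k, (η * r k / G) * Δ = m * (η * r k / G) * Δ := by
      rw [Finset.sum_const, Nat.card_Ico, nsmul_eq_mul, Nat.cast_sub hk.le]
      rw [hm]; ring
    linarith
  have hsum3 : ∑ j ∈ Finset.Ico k₀ k, ηk j * Δ ≤ D / 2 := by
    calc ∑ j ∈ Finset.Ico k₀ k, ηk j * Δ
        ≤ ∑ j ∈ Finset.Ico k₀ k, ηk j * (f (θ (j + 1)) - f θstar) :=
          Finset.sum_le_sum hterm
      _ ≤ (D - ‖θ k - θstar‖ ^ 2) / 2 := hsum1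
      _ ≤ D / 2 := by nlinarith [sq_nonneg ‖θ k - θstar‖]
  have H : Δ * (m * (η * r k)) ≤ D / 2 * G := by
    have h1 : m * (η * r k / G) * Δ = Δ * (m * (η * r k)) / G := by ring
    rw [h1, div_le_iff₀ hGpos] at hsum2
    calc Δ * (m * (η * r k)) ≤ (∑ j ∈ Finset.Ico k₀ k, ηk j * Δ) * G := hsum2
      _ ≤ D / 2 * G := mul_le_mul_of_nonneg_right hsum3 hGpos.le
  have hpos2 : 0 < 2 * m * r k := mul_pos (mul_pos two_pos hmpos) (hrpos k)
  clear_value G m D Δ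
  show Δ ≤ G / η * D / (2 * m * r k)
  rw [le_div_iff₀ hpos2, div_mul_eq_mul_div, le_div_iff₀ hη]
  have hre : Δ * (2 * m * r k) * η = 2 * (Δ * (m * (η * r k))) := by ring
  rw [hre]
  linarith
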